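/- If X ~ Binomial(n, p) with p ≥ 2e²Δ_n, where Δ_n = (ln n)^{2η}/n and η > 1, and g_n(X) = (X/n)·1{X/n > e²Δ_n}, then E|g_n(X) - p| ≤ √(p/n) + n^{-e²/4}. -/

import Mathlib

noncomputable def Wbin (n : ℕ) (p : ℝ) (k : ℕ) : ℝ :=
  (n.choose k : ℝ) * p ^ k * (1 - p) ^ (n - k)

lemma Wbin_nonneg {n : ℕ} {p : ℝ} (hp0 : 0 ≤ p) (hp1 : p ≤ 1) (k : ℕ) :
    0 ≤ Wbin n p k := by
  unfold Wbin
  have : (0:ℝ) ≤ 1 - p := by linarith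
  positivity

lemma Wbin_sum {n : ℕ} {p : ℝ} (hp0 : 0 ≤ p) (hp1 : p ≤ 1) :
    ∑ k ∈ Finset.range (n + 1), Wbin n p k = 1 := by
  rw [Finset.sum_range]
  simpa [Wbin, bernstein_apply] using bernstein.probability n ⟨p, hp0, hp1⟩

lemma Wbin_var {n : ℕ} {p : ℝ} (hn : 0 < (n:ℝ)) (hp0 : 0 ≤ p) (hp1 : p ≤ 1) :
    ∑ k ∈ Finset.range (n + 1), (p - (k:ℝ)/n) ^ 2 * Wbin n p k = p * (1 - p) / n := by
  rw [Finset.sum_range]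
  simpa [Wbin, bernstein_apply, bernstein.z] using bernstein.variance (Nat.cast_pos.mp hn).ne' ⟨p, hp0, hp1⟩

lemma Wbin_mgf {n : ℕ} (p : ℝ) :
    ∑ k ∈ Finset.range (n + 1), Wbin n p k * (1/2:ℝ) ^ k = (1 - p/2) ^ n := by
  have h := add_pow (R := ℝ) (p/2) (1-p) n
  rw [show p/2 + (1-p) = 1 - p/2 by ring] at h
  rw [h]
  refine Finset.sum_congr rfl fun k _ => ?_
  simp only [Wbin, div_pow]
  ring

lemma Wbin_L1 {n : ℕ} {p : ℝ} (hn : 0 < (n:ℝ)) (hp0 : 0 ≤ p) (hp1 : p ≤ 1) :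
    ∑ k ∈ Finset.range (n + 1), Wbin n p k * |(k:ℝ)/n - p| ≤ Real.sqrt (p / n) := by
  have key : ∀ k, Wbin n p k * |(k:ℝ)/n - p|
      = Real.sqrt (Wbin n p k) * Real.sqrt ((p - (k:ℝ)/n) ^ 2 * Wbin n p k) := by
    intro k
    rw [← Real.sqrt_mul (Wbin_nonneg hp0 hp1 k)]
    rw [show Wbin n p k * ((p - (k:ℝ)/n) ^ 2 * Wbin n p k)
        = (Wbin n p k * |(k:ℝ)/n - p|) ^ 2 by
      have h1 : |(k:ℝ)/n - p| ^ 2 = (p - (k:ℝ)/n) ^ 2 := by rw [sq_abs]; ring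
      rw [mul_pow, h1]; ring]
    rw [Real.sqrt_sq (mul_nonneg (Wbin_nonneg hp0 hp1 k) (abs_nonneg _))]
  calc ∑ k ∈ Finset.range (n + 1), Wbin n p k * |(k:ℝ)/n - p|
      = ∑ k ∈ Finset.range (n + 1),
          Real.sqrt (Wbin n p k) * Real.sqrt ((p - (k:ℝ)/n) ^ 2 * Wbin n p k) :=
        Finset.sum_congr rfl fun k _ => key k
    _ ≤ Real.sqrt (∑ k ∈ Finset.range (n + 1), Wbin n p k)
        * Real.sqrt (∑ k ∈ Finset.range (n + 1), (p - (k:ℝ)/n) ^ 2 * Wbin n p k) :=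
        Real.sum_sqrt_mul_sqrt_le _ (fun k => Wbin_nonneg hp0 hp1 k)
          (fun k => mul_nonneg (sq_nonneg _) (Wbin_nonneg hp0 hp1 k))
    _ = Real.sqrt (p * (1 - p) / n) := by
        rw [Wbin_sum hp0 hp1, Wbin_var hn hp0 hp1, Real.sqrt_one, one_mul]
    _ ≤ Real.sqrt (p / n) := by
        apply Real.sqrt_le_sqrt
        apply div_le_div_of_nonneg_right _ hn.le
        nlinarith

open Classical

theorem hard_threshold_risk_large_p (n : ℕ) (η p : ℝ) (hn : 2 ≤ n) (hη : 1 < η)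
    (hp1 : p ≤ 1) (hpΔ : 2 * Real.exp 2 * (Real.log n ^ (2 * η) / n) ≤ p) :
    ∑ k ∈ Finset.range (n + 1), (n.choose k : ℝ) * p ^ k * (1 - p) ^ (n - k) *
        |(if (k : ℝ) / n > Real.exp 2 * (Real.log n ^ (2 * η) / n) then (k : ℝ) / n else 0) - p|
      ≤ Real.sqrt (p / n) + (n : ℝ) ^ (-(Real.exp 2) / 4) := by
  have hnR : (2:ℝ) ≤ (n:ℝ) := by exact_mod_cast hn
  have hn0 : (0:ℝ) < n := by linarith
  set t : ℝ := Real.exp 2 * (Real.log n ^ (2 * η) / n) with ht_def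
  have hlogn : 0 < Real.log n := Real.log_pos (by linarith)
  have htpos : 0 < t := by
    have : 0 < Real.log (n:ℝ) ^ (2 * η) / n :=
      div_pos (Real.rpow_pos_of_pos hlogn _) hn0
    exact mul_pos (Real.exp_pos 2) this
  have ht2 : 2 * t ≤ p := by rw [ht_def]; linarith [hpΔ]
  have hp0 : 0 < p := by linarith
  -- pointwise decomposition
  have split : ∀ k ∈ Finset.range (n+1),
      Wbin n p k * |(if (k : ℝ) / n > t then (k : ℝ) / n else 0) - p|
      = Wbin n p k * |(k:ℝ)/n - p|
        + Wbin n p k * (if (k : ℝ) / n > t then 0 else (k:ℝ)/n) := by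
    intro k _
    by_cases h : (k : ℝ) / n > t
    · rw [if_pos h, if_pos h, mul_zero, add_zero]
    · rw [if_neg h, if_neg h]
      push_neg at h
      have hkp : (k:ℝ)/n ≤ p := by linarith
      have h1 : |(0:ℝ) - p| = p := by rw [zero_sub, abs_neg, abs_of_pos hp0]
      have h2 : |(k:ℝ)/n - p| = p - (k:ℝ)/n := by
        rw [abs_of_nonpos (by linarith), neg_sub]
      rw [h1, h2]; ring
  -- second sum bound
  have hS2 : ∑ k ∈ Finset.range (n+1), Wbin n p k * (if (k : ℝ) / n > t then 0 else (k:ℝ)/n)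
      ≤ (n:ℝ) ^ (-(Real.exp 2) / 4) := by
    rcases eq_or_lt_of_le hn with h2 | h3
    · -- n = 2 : second sum is zero
      have hrpow : (0:ℝ) ≤ (n:ℝ) ^ (-(Real.exp 2) / 4) := Real.rpow_nonneg hn0.le _
      refine le_trans (le_of_eq (Finset.sum_eq_zero ?_)) hrpow
      intro k hk
      rw [Finset.mem_range] at hk
      subst h2
      interval_cases k
      · norm_num
      · by_cases hp : p = 1
        · have : Wbin 2 p 1 = 0 := by simp [Wbin, hp]
          rw [this, zero_mul]
        · have hplt : p < 1 := lt_of_le_of_ne hp1 hp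
          have hcond : ((1:ℕ):ℝ) / (2:ℕ) > t := by
            push_cast
            have : t ≤ p / 2 := by linarith
            linarith
          rw [if_pos hcond, mul_zero]
      · have hcond : ((2:ℕ):ℝ) / (2:ℕ) > t := by
          push_cast
          norm_num
          have : t ≤ p / 2 := by linarith
          linarith
        rw [if_pos hcond, mul_zero]
    · -- n ≥ 3
      have hn3 : (3:ℝ) ≤ (n:ℝ) := by exact_mod_cast h3
      have hlog1 : 1 ≤ Real.log n := by
        rw [Real.le_log_iff_exp_le hn0]
        have := Real.exp_one_lt_d9
        linarith
      have hnp : 2 * Real.exp 2 * Real.log n ≤ (n:ℝ) * p := by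
        have ha : Real.log (n:ℝ) ≤ Real.log (n:ℝ) ^ (2 * η) := by
          nth_rewrite 1 [← Real.rpow_one (Real.log (n:ℝ))]
          exact Real.rpow_le_rpow_of_exponent_le hlog1 (by linarith)
        have hb : 2 * Real.exp 2 * (Real.log (n:ℝ) ^ (2 * η)) ≤ (n:ℝ) * p := by
          have := hpΔ
          rw [← mul_div_assoc] at this
          rw [div_le_iff₀ hn0] at this
          linarith [this]
        nlinarith [Real.exp_pos 2]
      -- step 1: termwise bound by MGF terms
      have step1 : ∑ k ∈ Finset.range (n+1),
            Wbin n p k * (if (k : ℝ) / n > t then 0 else (k:ℝ)/n)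
          ≤ t * (2:ℝ) ^ ((n:ℝ) * t) * (1 - p/2) ^ n := by
        have e1 : ∀ k ∈ Finset.range (n+1),
            Wbin n p k * (if (k : ℝ) / n > t then 0 else (k:ℝ)/n)
            ≤ (t * (2:ℝ) ^ ((n:ℝ) * t)) * (Wbin n p k * (1/2:ℝ) ^ k) := by
          intro k _
          have hw := Wbin_nonneg (n := n) hp0.le hp1 k
          have hpow2 : (0:ℝ) < (2:ℝ) ^ ((n:ℝ) * t) := Real.rpow_pos_of_pos two_pos _
          by_cases h : (k : ℝ) / n > t
          · rw [if_pos h, mul_zero]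
            positivity
          · rw [if_neg h]
            push_neg at h
            have hk' : (k:ℝ) ≤ (n:ℝ) * t := by
              rw [div_le_iff₀ hn0] at h; linarith
            have h2 : (2:ℝ) ^ ((k:ℕ):ℝ) ≤ (2:ℝ) ^ ((n:ℝ) * t) :=
              Real.rpow_le_rpow_of_exponent_le one_le_two hk'
            have h2' : (2:ℝ) ^ (k:ℕ) ≤ (2:ℝ) ^ ((n:ℝ) * t) := by
              rwa [Real.rpow_natCast] at h2
            have h3 : (1:ℝ) ≤ (2:ℝ) ^ ((n:ℝ) * t) * (1/2:ℝ) ^ k := by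
              rw [one_div, inv_pow, ← div_eq_mul_inv, le_div_iff₀ (by positivity), one_mul]
              exact h2'
            calc Wbin n p k * ((k:ℝ)/n) ≤ Wbin n p k * t :=
                  mul_le_mul_of_nonneg_left h hw
              _ = (t * 1) * Wbin n p k := by ring
              _ ≤ (t * ((2:ℝ) ^ ((n:ℝ) * t) * (1/2:ℝ) ^ k)) * Wbin n p k := by
                  apply mul_le_mul_of_nonneg_right _ hw
                  exact mul_le_mul_of_nonneg_left h3 htpos.le
              _ = (t * (2:ℝ) ^ ((n:ℝ) * t)) * (Wbin n p k * (1/2:ℝ) ^ k) := by ring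
        calc ∑ k ∈ Finset.range (n+1),
              Wbin n p k * (if (k : ℝ) / n > t then 0 else (k:ℝ)/n)
            ≤ ∑ k ∈ Finset.range (n+1),
              (t * (2:ℝ) ^ ((n:ℝ) * t)) * (Wbin n p k * (1/2:ℝ) ^ k) :=
              Finset.sum_le_sum e1
          _ = (t * (2:ℝ) ^ ((n:ℝ) * t)) *
              ∑ k ∈ Finset.range (n+1), Wbin n p k * (1/2:ℝ) ^ k := by
              rw [Finset.mul_sum]
          _ = t * (2:ℝ) ^ ((n:ℝ) * t) * (1 - p/2) ^ n := by rw [Wbin_mgf]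
      refine step1.trans ?_
      -- step 2: numeric bound
      have ht1 : t ≤ 1 := by linarith
      have e2 : (2:ℝ) ^ ((n:ℝ) * t) = Real.exp (Real.log 2 * ((n:ℝ) * t)) :=
        Real.rpow_def_of_pos two_pos _
      have e3 : (1 - p/2) ^ n ≤ Real.exp ((n:ℝ) * -(p/2)) := by
        have h1 : (1 - p/2) ≤ Real.exp (-(p/2)) := by
          linarith [Real.add_one_le_exp (-(p/2))]
        calc (1 - p/2) ^ n ≤ Real.exp (-(p/2)) ^ n :=
              pow_le_pow_left₀ (by linarith) h1 n
          _ = Real.exp ((n:ℝ) * -(p/2)) := by rw [← Real.exp_nat_mul]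
      have hnt : (n:ℝ) * t ≤ (n:ℝ) * p / 2 := by nlinarith
      have hnt0 : (0:ℝ) ≤ (n:ℝ) * t := by positivity
      have hL2 : Real.log 2 < 0.6931471808 := Real.log_two_lt_d9
      have hL2' : 0 < Real.log 2 := Real.log_pos one_lt_two
      have hexp : Real.log 2 * ((n:ℝ) * t) + (n:ℝ) * -(p/2)
          ≤ Real.log (n:ℝ) * (-(Real.exp 2) / 4) := by
        have i1 : Real.log 2 * ((n:ℝ) * t) ≤ Real.log 2 * ((n:ℝ) * p / 2) :=
          mul_le_mul_of_nonneg_left hnt hL2'.le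
        have i2 : (1 - 0.6931471808) * (Real.exp 2 * Real.log (n:ℝ))
            ≤ (1 - 0.6931471808) * ((n:ℝ) * p / 2) := by
          apply mul_le_mul_of_nonneg_left _ (by norm_num)
          linarith
        have i3 : (Real.exp 2 / 4) * Real.log (n:ℝ)
            ≤ (1 - 0.6931471808) * (Real.exp 2 * Real.log (n:ℝ)) := by
          nlinarith [Real.exp_pos 2, hlogn]
        nlinarith [hnt0, mul_nonneg hnt0 (by linarith [Real.log_two_lt_d9] : (0:ℝ) ≤ 0.6931471808 - Real.log 2)]
      calc t * (2:ℝ) ^ ((n:ℝ) * t) * (1 - p/2) ^ n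
          ≤ 1 * Real.exp (Real.log 2 * ((n:ℝ) * t)) * Real.exp ((n:ℝ) * -(p/2)) := by
            rw [e2]
            have h0 : (0:ℝ) ≤ (1 - p/2) ^ n := pow_nonneg (by linarith) n
            apply mul_le_mul _ e3 h0 (by positivity)
            apply mul_le_mul ht1 le_rfl (Real.exp_pos _).le (by norm_num)
        _ = Real.exp (Real.log 2 * ((n:ℝ) * t) + (n:ℝ) * -(p/2)) := by
            rw [one_mul, ← Real.exp_add]
        _ ≤ Real.exp (Real.log (n:ℝ) * (-(Real.exp 2) / 4)) := Real.exp_le_exp.mpr hexp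
        _ = (n:ℝ) ^ (-(Real.exp 2) / 4) := (Real.rpow_def_of_pos hn0 _).symm
  -- assemble
  calc ∑ k ∈ Finset.range (n + 1), (n.choose k : ℝ) * p ^ k * (1 - p) ^ (n - k) *
        |(if (k : ℝ) / n > t then (k : ℝ) / n else 0) - p|
      = ∑ k ∈ Finset.range (n + 1), (Wbin n p k * |(k:ℝ)/n - p|
          + Wbin n p k * (if (k : ℝ) / n > t then 0 else (k:ℝ)/n)) :=
        Finset.sum_congr rfl split
    _ = (∑ k ∈ Finset.range (n + 1), Wbin n p k * |(k:ℝ)/n - p|)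
        + ∑ k ∈ Finset.range (n + 1), Wbin n p k * (if (k : ℝ) / n > t then 0 else (k:ℝ)/n) :=
        Finset.sum_add_distrib
    _ ≤ Real.sqrt (p / n) + (n:ℝ) ^ (-(Real.exp 2) / 4) :=
        add_le_add (Wbin_L1 hn0 hp0.le hp1) hS2
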